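/- arXiv:1105.3652 — 4 statements merged into one kernel-verified Lean document; each statement's English description precedes it below -/
import Mathlib

section
/- With the notation of the parallel-surface curvature transformation: if K = ν₁ν₂, H = (ν₁+ν₂)/2, H' = (ν₁−ν₂)/2, K̄ = ν̄₁ν̄₂, H̄ = (ν̄₁+ν̄₂)/2, H̄' = (ν̄₁−ν̄₂)/2, where ν̄ᵢ = ε·νᵢ/(1−aνᵢ) and ε = sign((1−aν₁)(1−aν₂)), then 1 + 2aεH̄ + a²K̄ ≠ 0 and K = K̄/(1 + 2aεH̄ + a²K̄), H = (εH̄ + aK̄)/(1 + 2aεH̄ + a²K̄), H' = εH̄'/(1 + 2aεH̄ + a²K̄). -/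
/-- transformation formulas (4.4) between the curvature invariants
K, H, H' of a time-like surface and K̄, H̄, H̄' of its parallel surface. -/
theorem stmt3 (a ν₁ ν₂ : ℝ) (ha : a ≠ 0) (h : (1 - a * ν₁) * (1 - a * ν₂) ≠ 0)
    (ε : ℝ) (hε : ε = if 0 < (1 - a * ν₁) * (1 - a * ν₂) then 1 else -1) :
    let νb₁ := ε * ν₁ / (1 - a * ν₁)
    let νb₂ := ε * ν₂ / (1 - a * ν₂)
    let Kb := νb₁ * νb₂
    let Hb := (νb₁ + νb₂) / 2
    let Hb' := (νb₁ - νb₂) / 2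
    1 + 2 * a * ε * Hb + a ^ 2 * Kb ≠ 0 ∧
    ν₁ * ν₂ = Kb / (1 + 2 * a * ε * Hb + a ^ 2 * Kb) ∧
    (ν₁ + ν₂) / 2 = (ε * Hb + a * Kb) / (1 + 2 * a * ε * Hb + a ^ 2 * Kb) ∧
    (ν₁ - ν₂) / 2 = ε * Hb' / (1 + 2 * a * ε * Hb + a ^ 2 * Kb) := by
  intro νb₁ νb₂ Kb Hb Hb'
  obtain ⟨hu, hv⟩ : (1 - a * ν₁) ≠ 0 ∧ (1 - a * ν₂) ≠ 0 := mul_ne_zero_iff.mp h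
  have hε2 : ε * ε = 1 := by
    rw [hε]; split <;> norm_num
  have hε2' : ε ^ 2 = 1 := by rw [sq]; exact hε2
  have hD : 1 + 2 * a * ε * Hb + a ^ 2 * Kb = 1 / ((1 - a * ν₁) * (1 - a * ν₂)) := by
    simp only [Hb, Kb, νb₁, νb₂]
    field_simp
    ring_nf
    rw [hε2']
    ring
  have hu' : 1 - ν₁ * a ≠ 0 := by rwa [mul_comm]
  have hv' : 1 - ν₂ * a ≠ 0 := by rwa [mul_comm]
  refine ⟨by rw [hD]; exact one_div_ne_zero h, ?_, ?_, ?_⟩ <;>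
    rw [hD] <;> simp only [Kb, Hb, Hb', νb₁, νb₂] <;> field_simp <;> ring_nf <;>
    rw [hε2'] <;> ring
end

section
/- Suppose real numbers ν₁, ν₂ satisfy α·(ν₁+ν₂)/2 + β·(ν₁−ν₂)/2 + γ = 0 (the relation αH + βH' + γ = 0). Let a ≠ 0 with (1−aν₁)(1−aν₂) ≠ 0, ε = sign((1−aν₁)(1−aν₂)), and ν̄ᵢ = ε·νᵢ/(1−aνᵢ). Then ε(α + 2aγ)·H̄ + εβ·H̄' + γ = −a(α + aγ)·K̄, where H̄ = (ν̄₁+ν̄₂)/2, H̄' = (ν̄₁−ν̄₂)/2, K̄ = ν̄₁ν̄₂. -/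
/-- relation (5.5) -- parallel surfaces of a surface with αH + βH' + γ = 0
satisfy ε(α + 2aγ)H̄ + εβH̄' + γ = −a(α + aγ)K̄. -/
theorem stmt4 (α β γ a ν₁ ν₂ : ℝ) (ha : a ≠ 0)
    (hrel : α * ((ν₁ + ν₂) / 2) + β * ((ν₁ - ν₂) / 2) + γ = 0)
    (h : (1 - a * ν₁) * (1 - a * ν₂) ≠ 0)
    (ε : ℝ) (hε : ε = if 0 < (1 - a * ν₁) * (1 - a * ν₂) then 1 else -1) :
    let νb₁ := ε * ν₁ / (1 - a * ν₁)
    let νb₂ := ε * ν₂ / (1 - a * ν₂)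
    let Kb := νb₁ * νb₂
    let Hb := (νb₁ + νb₂) / 2
    let Hb' := (νb₁ - νb₂) / 2
    ε * (α + 2 * a * γ) * Hb + ε * β * Hb' + γ = -a * (α + a * γ) * Kb := by
  intro νb₁ νb₂ Kb Hb Hb'
  have h1 : (1 - a * ν₁) ≠ 0 := fun hh => h (by rw [hh]; ring)
  have h2 : (1 - a * ν₂) ≠ 0 := fun hh => h (by rw [hh]; ring)
  simp only [νb₁, νb₂, Kb, Hb, Hb']
  rw [hε]
  split <;> field_simp <;> ring_nf <;>
    linear_combination 2 * hrel
end

section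
/- Suppose real numbers ν₁, ν₂ satisfy ν₁ν₂ = α·(ν₁+ν₂)/2 + β·(ν₁−ν₂)/2 + γ (the relation K = αH + βH' + γ). Let a ≠ 0 with (1−aν₁)(1−aν₂) ≠ 0, ε = sign((1−aν₁)(1−aν₂)), and ν̄ᵢ = ε·νᵢ/(1−aνᵢ). Then ε(α + 2aγ)·H̄ + εβ·H̄' + γ = (1 − aα − a²γ)·K̄, where H̄ = (ν̄₁+ν̄₂)/2, H̄' = (ν̄₁−ν̄₂)/2, K̄ = ν̄₁ν̄₂. -/
/-- relation (5.14) -- parallel surfaces of a surface with K = αH + βH' + γ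
satisfy ε(α + 2aγ)H̄ + εβH̄' + γ = (1 − aα − a²γ)K̄. -/
theorem stmt5 (α β γ a ν₁ ν₂ : ℝ) (ha : a ≠ 0)
    (hrel : ν₁ * ν₂ = α * ((ν₁ + ν₂) / 2) + β * ((ν₁ - ν₂) / 2) + γ)
    (h : (1 - a * ν₁) * (1 - a * ν₂) ≠ 0)
    (ε : ℝ) (hε : ε = if 0 < (1 - a * ν₁) * (1 - a * ν₂) then 1 else -1) :
    let νb₁ := ε * ν₁ / (1 - a * ν₁)
    let νb₂ := ε * ν₂ / (1 - a * ν₂)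
    let Kb := νb₁ * νb₂
    let Hb := (νb₁ + νb₂) / 2
    let Hb' := (νb₁ - νb₂) / 2
    ε * (α + 2 * a * γ) * Hb + ε * β * Hb' + γ = (1 - a * α - a ^ 2 * γ) * Kb := by
  intro νb₁ νb₂ Kb Hb Hb'
  have h1 : (1 - a * ν₁) ≠ 0 := fun hh => h (by rw [hh]; ring)
  have h2 : (1 - a * ν₂) ≠ 0 := fun hh => h (by rw [hh]; ring)
  have hε1 : ε = 1 ∨ ε = -1 := by rw [hε]; split <;> simp
  simp only [νb₁, νb₂, Kb, Hb, Hb']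
  rcases hε1 with rfl | rfl <;> field_simp <;>
    linear_combination (-2) * hrel
end

section
/- Let E, G, ν₁, ν₂ be functions given in natural principal parameters by E = −a⁻² exp(−2∫_{ν₀}^{ν} f'/(f−g)), G = b⁻² exp(−2∫_{ν₀}^{ν} g'/(g−f)), ν₁ = f(ν), ν₂ = g(ν), where a, b ≠ 0 and f, g are C¹ with f − g never zero. Then √(−E·G)·(ν₁ − ν₂) = (f(ν₀) − g(ν₀))/(|a||b|), a nonzero constant independent of ν. -/
/-- Proposition 3.5: in natural principal parameters,
√(−EG)(ν₁ − ν₂) = (f(ν₀) − g(ν₀))/(|a||b|) is a nonzero constant. -/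
theorem stmt13 (I : Set ℝ) (hI : I.OrdConnected) (f g f' g' : ℝ → ℝ)
    (hf : ∀ x ∈ I, HasDerivAt f (f' x) x) (hg : ∀ x ∈ I, HasDerivAt g (g' x) x)
    (hf' : ContinuousOn f' I) (hg' : ContinuousOn g' I)
    (hfg : ∀ x ∈ I, f x ≠ g x) (ν₀ : ℝ) (hν₀ : ν₀ ∈ I)
    (a b : ℝ) (ha : a ≠ 0) (hb : b ≠ 0) :
    let E : ℝ → ℝ := fun ν => -(a⁻¹ ^ 2) * Real.exp (-2 * ∫ t in ν₀..ν, f' t / (f t - g t))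
    let G : ℝ → ℝ := fun ν => b⁻¹ ^ 2 * Real.exp (-2 * ∫ t in ν₀..ν, g' t / (g t - f t))
    (∀ ν ∈ I, Real.sqrt (-(E ν * G ν)) * (f ν - g ν) = (f ν₀ - g ν₀) / (|a| * |b|)) ∧
    (f ν₀ - g ν₀) / (|a| * |b|) ≠ 0 := by
  intro E G
  have hfc : ContinuousOn f I := fun x hx => (hf x hx).continuousAt.continuousWithinAt
  have hgc : ContinuousOn g I := fun x hx => (hg x hx).continuousAt.continuousWithinAt
  have hneI : ∀ x ∈ I, f x - g x ≠ 0 := fun x hx => sub_ne_zero.2 (hfg x hx)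
  have h0ne : f ν₀ - g ν₀ ≠ 0 := hneI ν₀ hν₀
  have habne : |a| * |b| ≠ 0 := mul_ne_zero (abs_ne_zero.2 ha) (abs_ne_zero.2 hb)
  constructor
  · intro ν hν
    have hsub : Set.uIcc ν₀ ν ⊆ I := hI.uIcc_subset hν₀ hν
    have hne : ∀ x ∈ Set.uIcc ν₀ ν, f x - g x ≠ 0 := fun x hx => hneI x (hsub hx)
    have hνne : f ν - g ν ≠ 0 := hneI ν hν
    have hcontsub : ContinuousOn (fun t => f t - g t) I := hfc.sub hgc
    have hcont1 : ContinuousOn (fun t => f' t / (f t - g t)) I :=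
      hf'.div hcontsub hneI
    have hcont2 : ContinuousOn (fun t => g' t / (g t - f t)) I := by
      apply hg'.div (hgc.sub hfc)
      intro x hx
      exact sub_ne_zero.2 fun h => hfg x hx h.symm
    have hint1 : IntervalIntegrable (fun t => f' t / (f t - g t)) MeasureTheory.volume ν₀ ν :=
      (hcont1.mono hsub).intervalIntegrable
    have hint2 : IntervalIntegrable (fun t => g' t / (g t - f t)) MeasureTheory.volume ν₀ ν :=
      (hcont2.mono hsub).intervalIntegrable
    have hadd : (∫ t in ν₀..ν, f' t / (f t - g t)) + (∫ t in ν₀..ν, g' t / (g t - f t))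
        = ∫ t in ν₀..ν, (f' t - g' t) / (f t - g t) := by
      rw [← intervalIntegral.integral_add hint1 hint2]
      apply intervalIntegral.integral_congr
      intro x hx
      have h1 : f x - g x ≠ 0 := hne x hx
      have h2 : g x - f x ≠ 0 := fun h => h1 (by linarith [sub_eq_zero.mp h])
      field_simp
      ring
    have hlog : (∫ t in ν₀..ν, (f' t - g' t) / (f t - g t))
        = Real.log (f ν - g ν) - Real.log (f ν₀ - g ν₀) := by
      apply intervalIntegral.integral_eq_sub_of_hasDerivAt
      · intro x hx
        exact ((hf x (hsub hx)).sub (hg x (hsub hx))).log (hne x hx)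
      · exact (((hf'.sub hg').div hcontsub hneI).mono hsub).intervalIntegrable
    -- exp of log identities
    have hexp : ∀ x : ℝ, x ≠ 0 → Real.exp (Real.log x) = |x| := by
      intro x hx
      rw [← Real.log_abs, Real.exp_log (abs_pos.2 hx)]
    -- key product formula
    have hprod : -(E ν * G ν) = (|f ν₀ - g ν₀| / (|a| * |b| * |f ν - g ν|)) ^ 2 := by
      have : -(E ν * G ν) = a⁻¹ ^ 2 * b⁻¹ ^ 2 *
          Real.exp (-2 * ((∫ t in ν₀..ν, f' t / (f t - g t)) +
            (∫ t in ν₀..ν, g' t / (g t - f t)))) := by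
        simp only [E, G]
        rw [mul_add, Real.exp_add]
        ring
      rw [this, hadd, hlog]
      have e1 : Real.exp (-2 * (Real.log (f ν - g ν) - Real.log (f ν₀ - g ν₀)))
          = (Real.exp (Real.log (f ν₀ - g ν₀))) ^ 2 / (Real.exp (Real.log (f ν - g ν))) ^ 2 := by
        rw [show (-2 : ℝ) * (Real.log (f ν - g ν) - Real.log (f ν₀ - g ν₀))
            = (Real.log (f ν₀ - g ν₀) + Real.log (f ν₀ - g ν₀))
              - (Real.log (f ν - g ν) + Real.log (f ν - g ν)) by ring,
          Real.exp_sub, Real.exp_add, Real.exp_add]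
        ring
      rw [e1, hexp _ h0ne, hexp _ hνne]
      have hνabs : |f ν - g ν| ≠ 0 := abs_ne_zero.2 hνne
      field_simp [mul_pow]
      rw [sq_abs, sq_abs]
    have hsqrt : Real.sqrt (-(E ν * G ν)) = |f ν₀ - g ν₀| / (|a| * |b| * |f ν - g ν|) := by
      rw [hprod, Real.sqrt_sq (by positivity)]
    rw [hsqrt]
    -- sign constancy
    have hsign : 0 < (f ν - g ν) * (f ν₀ - g ν₀) := by
      by_contra h
      push_neg at h
      have hmem : (0 : ℝ) ∈ Set.uIcc (f ν₀ - g ν₀) (f ν - g ν) := by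
        rcases mul_nonpos_iff.mp h with ⟨h1, h2⟩ | ⟨h1, h2⟩
        · exact Set.mem_uIcc.2 (Or.inl ⟨h2, h1⟩)
        · exact Set.mem_uIcc.2 (Or.inr ⟨h1, h2⟩)
      have := intermediate_value_uIcc (hcontsub.mono hsub) hmem
      obtain ⟨t, ht, ht0⟩ := this
      exact hne t ht ht0
    -- finish
    have habs : |f ν - g ν| ≠ 0 := abs_ne_zero.2 hνne
    have key : |f ν₀ - g ν₀| * (f ν - g ν) = (f ν₀ - g ν₀) * |f ν - g ν| := by
      rcases lt_or_gt_of_ne hνne with hlt | hgt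
      · have h0lt : f ν₀ - g ν₀ < 0 := by nlinarith
        rw [abs_of_neg hlt, abs_of_neg h0lt]; ring
      · have h0gt : 0 < f ν₀ - g ν₀ := by nlinarith
        rw [abs_of_pos hgt, abs_of_pos h0gt]
    rw [div_mul_eq_mul_div, key, mul_comm (|a| * |b|) (|f ν - g ν|),
      mul_comm (f ν₀ - g ν₀) (|f ν - g ν|), mul_div_mul_left _ _ habs]
  · exact div_ne_zero h0ne habne
end
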